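/- For every z ∈ Z and every n ≥ 2, ‖K_Z^{n−1}(z,·) − Π_Z(·)‖ ≤ ‖ν_z K*^{(n−2)}(·) − Π*(·)‖, where ν_z is the distribution with Z = z almost surely and X ~ Π_{X|Z}(·|z). -/

import Mathlib

open MeasureTheory ProbabilityTheory
open scoped ENNReal

noncomputable def tvDist {E : Type*} [MeasurableSpace E] (μ ν : Measure E) : ℝ :=
  ⨆ A : {A : Set E // MeasurableSet A}, |(μ A.1).toReal - (ν A.1).toReal|

noncomputable def kpow {E : Type*} [MeasurableSpace E] (P : Kernel E E) : ℕ → Kernel E E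
  | 0 => Kernel.id
  | n + 1 => (kpow P n) ∘ₖ P

section Aux

variable {α β γ : Type*} [MeasurableSpace α] [MeasurableSpace β] [MeasurableSpace γ]

lemma aux_map_bind (μ : Measure α) {f : α → Measure β} (hf : Measurable f)
    {g : β → γ} (hg : Measurable g) :
    (μ.bind f).map g = μ.bind (fun a => (f a).map g) := by
  rw [← Measure.bind_dirac_eq_map _ hg,
    Measure.bind_bind (g := fun b => Measure.dirac (g b)) hf.aemeasurable
      (Measure.measurable_dirac.comp hg).aemeasurable]
  congr 1
  funext a
  rw [Measure.bind_dirac_eq_map _ hg]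

lemma aux_bind_map (μ : Measure α) {f : α → β} (hf : Measurable f)
    {g : β → Measure γ} (hg : Measurable g) :
    (μ.map f).bind g = μ.bind (fun a => g (f a)) := by
  rw [← Measure.bind_dirac_eq_map _ hf,
    Measure.bind_bind (f := fun a => Measure.dirac (f a))
      (Measure.measurable_dirac.comp hf).aemeasurable hg.aemeasurable]
  congr 1
  funext a
  exact Measure.dirac_bind hg (f a)

lemma aux_isProbabilityMeasure_bind (μ : Measure α) [IsProbabilityMeasure μ]
    {f : α → Measure β} (hf : Measurable f) (h : ∀ a, IsProbabilityMeasure (f a)) :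
    IsProbabilityMeasure (μ.bind f) := by
  constructor
  rw [Measure.bind_apply MeasurableSet.univ hf.aemeasurable]
  have : ∀ a, f a Set.univ = 1 := fun a => (h a).measure_univ
  simp [this]

lemma kpow_isMarkov {E : Type*} [MeasurableSpace E] (P : Kernel E E) [IsMarkovKernel P] :
    ∀ n, IsMarkovKernel (kpow P n)
  | 0 => by rw [kpow]; infer_instance
  | n + 1 => by
      rw [kpow]
      haveI := kpow_isMarkov P n
      infer_instance

lemma tvDist_bddAbove (μ ν : Measure α) [IsProbabilityMeasure μ] [IsProbabilityMeasure ν] :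
    BddAbove (Set.range fun A : {A : Set α // MeasurableSet A} =>
      |(μ A.1).toReal - (ν A.1).toReal|) := by
  refine ⟨2, ?_⟩
  rintro x ⟨A, rfl⟩
  have h1 : (μ A.1).toReal ≤ 1 := ENNReal.toReal_mono ENNReal.one_ne_top prob_le_one
  have h2 : (ν A.1).toReal ≤ 1 := ENNReal.toReal_mono ENNReal.one_ne_top prob_le_one
  have h3 : (0:ℝ) ≤ (μ A.1).toReal := ENNReal.toReal_nonneg
  have h4 : (0:ℝ) ≤ (ν A.1).toReal := ENNReal.toReal_nonneg
  rw [abs_le]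
  constructor <;> linarith

lemma le_tvDist (μ ν : Measure α) [IsProbabilityMeasure μ] [IsProbabilityMeasure ν]
    {A : Set α} (hA : MeasurableSet A) :
    |(μ A).toReal - (ν A).toReal| ≤ tvDist μ ν :=
  le_ciSup (tvDist_bddAbove μ ν) ⟨A, hA⟩

lemma tvDist_le {μ ν : Measure α} {c : ℝ}
    (h : ∀ A : Set α, MeasurableSet A → |(μ A).toReal - (ν A).toReal| ≤ c) :
    tvDist μ ν ≤ c := by
  haveI : Nonempty {A : Set α // MeasurableSet A} := ⟨⟨∅, MeasurableSet.empty⟩⟩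
  exact ciSup_le (fun A => h A.1 A.2)

lemma lintegral_sub_le_tvDist (μ ν : Measure α) [IsProbabilityMeasure μ]
    [IsProbabilityMeasure ν] {f : α → ℝ≥0∞} (hf : Measurable f) (hf1 : ∀ a, f a ≤ 1) :
    (∫⁻ a, f a ∂μ).toReal - (∫⁻ a, f a ∂ν).toReal ≤ tvDist μ ν := by
  obtain ⟨s, hs, hsge, hsle⟩ := hahn_decomposition (μ := μ) (ν := ν)
  have hνs : ν s ≤ μ s := hsge s hs subset_rfl
  have hres : ν.restrict s ≤ μ.restrict s := by
    refine Measure.le_iff.mpr fun t ht => ?_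
    rw [Measure.restrict_apply ht, Measure.restrict_apply ht]
    exact hsge _ (ht.inter hs) Set.inter_subset_right
  have hresc : μ.restrict sᶜ ≤ ν.restrict sᶜ := by
    refine Measure.le_iff.mpr fun t ht => ?_
    rw [Measure.restrict_apply ht, Measure.restrict_apply ht]
    exact hsle _ (ht.inter hs.compl) Set.inter_subset_right
  have hint_le_one : ∀ (ρ : Measure α), ∫⁻ a, f a ∂ρ ≤ ρ Set.univ := by
    intro ρ
    calc ∫⁻ a, f a ∂ρ ≤ ∫⁻ _, 1 ∂ρ := lintegral_mono hf1
      _ = ρ Set.univ := by simp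
  have h1 : ∫⁻ a in s, f a ∂μ ≤ ∫⁻ a in s, f a ∂ν + (μ s - ν s) := by
    have hd : μ.restrict s - ν.restrict s + ν.restrict s = μ.restrict s :=
      Measure.sub_add_cancel_of_le hres
    calc ∫⁻ a in s, f a ∂μ
        = ∫⁻ a, f a ∂(μ.restrict s - ν.restrict s) + ∫⁻ a in s, f a ∂ν := by
          rw [← lintegral_add_measure, hd]
      _ ≤ (μ.restrict s - ν.restrict s) Set.univ + ∫⁻ a in s, f a ∂ν :=
          add_le_add (hint_le_one _) le_rfl
      _ = (μ s - ν s) + ∫⁻ a in s, f a ∂ν := by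
          rw [Measure.sub_apply MeasurableSet.univ hres, Measure.restrict_apply_univ,
            Measure.restrict_apply_univ]
      _ = ∫⁻ a in s, f a ∂ν + (μ s - ν s) := add_comm _ _
  have h2 : ∫⁻ a in sᶜ, f a ∂μ ≤ ∫⁻ a in sᶜ, f a ∂ν := lintegral_mono' hresc le_rfl
  have key : ∫⁻ a, f a ∂μ ≤ ∫⁻ a, f a ∂ν + (μ s - ν s) := by
    calc ∫⁻ a, f a ∂μ = ∫⁻ a in s, f a ∂μ + ∫⁻ a in sᶜ, f a ∂μ :=
          (lintegral_add_compl f hs).symm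
      _ ≤ (∫⁻ a in s, f a ∂ν + (μ s - ν s)) + ∫⁻ a in sᶜ, f a ∂ν := add_le_add h1 h2
      _ = (∫⁻ a in s, f a ∂ν + ∫⁻ a in sᶜ, f a ∂ν) + (μ s - ν s) := by ring
      _ = ∫⁻ a, f a ∂ν + (μ s - ν s) := by rw [lintegral_add_compl f hs]
  have hνfin : ∫⁻ a, f a ∂ν ≠ ⊤ := ne_top_of_le_ne_top (by simp) (hint_le_one ν)
  have hdfin : μ s - ν s ≠ ⊤ := ne_top_of_le_ne_top (measure_ne_top μ s) tsub_le_self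
  have key' : (∫⁻ a, f a ∂μ).toReal ≤ (∫⁻ a, f a ∂ν).toReal + (μ s - ν s).toReal := by
    have := ENNReal.toReal_mono (ENNReal.add_ne_top.mpr ⟨hνfin, hdfin⟩) key
    rwa [ENNReal.toReal_add hνfin hdfin] at this
  have hsub : (μ s - ν s).toReal = (μ s).toReal - (ν s).toReal :=
    ENNReal.toReal_sub_of_le hνs (measure_ne_top μ s)
  have hle : (μ s).toReal - (ν s).toReal ≤ |(μ s).toReal - (ν s).toReal| := le_abs_self _
  have htv := le_tvDist μ ν hs
  linarith [key', hsub.le, hsub.ge]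

lemma tvDist_comm (μ ν : Measure α) : tvDist μ ν = tvDist ν μ := by
  unfold tvDist
  congr 1
  funext A
  rw [abs_sub_comm]

lemma tvDist_bind_le (μ ν : Measure α) [IsProbabilityMeasure μ] [IsProbabilityMeasure ν]
    (κ : Kernel α β) [IsMarkovKernel κ] :
    tvDist (μ.bind κ) (ν.bind κ) ≤ tvDist μ ν := by
  refine tvDist_le fun A hA => ?_
  rw [Measure.bind_apply hA (Kernel.measurable κ).aemeasurable, Measure.bind_apply hA (Kernel.measurable κ).aemeasurable]
  have hfm : Measurable fun a => κ a A := Kernel.measurable_coe κ hA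
  have hf1 : ∀ a, κ a A ≤ 1 := fun _ => prob_le_one
  rw [abs_sub_le_iff]
  refine ⟨lintegral_sub_le_tvDist μ ν hfm hf1, ?_⟩
  rw [tvDist_comm]
  exact lintegral_sub_le_tvDist ν μ hfm hf1

lemma aux_map_snd_compProd (μ : Measure α) [SFinite μ] (κ : Kernel α β) [IsSFiniteKernel κ] :
    (μ ⊗ₘ κ).map Prod.snd = μ.bind κ := by
  ext s hs
  rw [Measure.map_apply measurable_snd hs, Measure.compProd_apply (measurable_snd hs),
    Measure.bind_apply hs (Kernel.measurable κ).aemeasurable]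
  rfl

end Aux

section Core

variable {X Y Z : Type*} [MeasurableSpace X] [MeasurableSpace Y] [MeasurableSpace Z]
variable (PXgZ : Kernel Z X) (PYgXZ : Kernel (X × Z) Y) (PZgXY : Kernel (X × Y) Z)

/-- Kernel extending a measure on `Y × Z` by drawing `X` from `PXgZ`. -/
noncomputable def eKer : Kernel (Y × Z) (Y × Z × X) :=
  (Kernel.id ×ₖ (PXgZ.comap Prod.snd measurable_snd)).map (fun r => (r.1.1, r.1.2, r.2))

noncomputable def aKer : Kernel (Y × Z × X) (X × Y) :=
  (Kernel.deterministic (fun p : Y × Z × X => p.2.2) (measurable_snd.comp measurable_snd))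
    ×ₖ (PYgXZ.comap (fun p : Y × Z × X => (p.2.2, p.2.1)) (by fun_prop))

noncomputable def bKer : Kernel (X × Y) (Y × Z) :=
  (Kernel.deterministic (fun r : X × Y => r.2) measurable_snd) ×ₖ PZgXY

/-- The "partial step" kernel from `Y × Z × X` to `Z`. -/
noncomputable def LKer : Kernel (Y × Z × X) Z := PZgXY ∘ₖ aKer PYgXZ

noncomputable def MKer : Kernel (Y × Z × X) (Y × Z) := bKer PZgXY ∘ₖ aKer PYgXZ

noncomputable def TKer : Kernel (Y × Z) (Y × Z) := MKer PYgXZ PZgXY ∘ₖ eKer PXgZ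

variable [IsMarkovKernel PXgZ] [IsMarkovKernel PYgXZ] [IsMarkovKernel PZgXY]

instance : IsMarkovKernel (eKer PXgZ (Y := Y)) := by
  unfold eKer; exact Kernel.IsMarkovKernel.map _ (by fun_prop)

instance : IsMarkovKernel (aKer PYgXZ) := by unfold aKer; infer_instance

instance : IsMarkovKernel (bKer PZgXY (Y := Y)) := by unfold bKer; infer_instance

instance : IsMarkovKernel (LKer PYgXZ PZgXY) := by unfold LKer; infer_instance

instance : IsMarkovKernel (MKer PYgXZ PZgXY) := by unfold MKer; infer_instance

instance : IsMarkovKernel (TKer PXgZ PYgXZ PZgXY) := by unfold TKer; infer_instance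

lemma eKer_apply (q : Y × Z) :
    eKer PXgZ q = (PXgZ q.2).map (fun x => (q.1, q.2, x)) := by
  rw [eKer, Kernel.map_apply _ (by fun_prop), Kernel.prod_apply, Kernel.id_apply,
    Kernel.comap_apply, Measure.dirac_prod,
    Measure.map_map (by fun_prop) measurable_prodMk_left]
  rfl

lemma aKer_apply (p : Y × Z × X) :
    aKer PYgXZ p = (PYgXZ (p.2.2, p.2.1)).map (fun y' => (p.2.2, y')) := by
  rw [aKer, Kernel.prod_apply, Kernel.deterministic_apply, Kernel.comap_apply,
    Measure.dirac_prod]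

lemma bKer_apply (r : X × Y) :
    bKer PZgXY (Y := Y) r = (PZgXY r).map (fun z' => (r.2, z')) := by
  rw [bKer, Kernel.prod_apply, Kernel.deterministic_apply, Measure.dirac_prod]

lemma LKer_apply (p : Y × Z × X) :
    LKer PYgXZ PZgXY p = (PYgXZ (p.2.2, p.2.1)).bind (fun y' => PZgXY (p.2.2, y')) := by
  rw [LKer, Kernel.comp_apply, aKer_apply,
    aux_bind_map _ measurable_prodMk_left (Kernel.measurable PZgXY)]

lemma eKer_bind_LKer (KZ : Kernel Z Z)
    (hKZ' : ∀ z : Z, KZ z =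
      (PXgZ z).bind fun x => (PYgXZ (x, z)).bind fun y => PZgXY (x, y))
    (q : Y × Z) :
    (eKer PXgZ q).bind (LKer PYgXZ PZgXY) = KZ q.2 := by
  rw [eKer_apply, aux_bind_map _ (by fun_prop) (Kernel.measurable _), hKZ']
  congr 1
  funext x
  rw [LKer_apply]

lemma Kstar_eq (Kstar : Kernel (Y × Z × X) (Y × Z × X))
    (hKstar : ∀ p : Y × Z × X, Kstar p =
      (PYgXZ (p.2.2, p.2.1)).bind fun y' =>
        (PZgXY (p.2.2, y')).bind fun z' =>
          (PXgZ z').map fun x' => (y', z', x'))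
    (p : Y × Z × X) :
    Kstar p = (MKer PYgXZ PZgXY p).bind (eKer PXgZ) := by
  rw [hKstar, MKer, Kernel.comp_apply,
    Measure.bind_bind (Kernel.measurable (bKer PZgXY)).aemeasurable (Kernel.measurable (eKer PXgZ)).aemeasurable,
    aKer_apply,
    aux_bind_map _ measurable_prodMk_left
      (g := fun r => ((bKer PZgXY (Y := Y)) r).bind ⇑(eKer PXgZ))
      ((Measure.measurable_bind' (Kernel.measurable _)).comp
        (Kernel.measurable (bKer PZgXY)))]
  congr 1
  funext y'
  rw [bKer_apply, aux_bind_map _ measurable_prodMk_left (Kernel.measurable _)]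
  congr 1
  funext z'
  rw [eKer_apply]

lemma eKer_bind_Kstar (Kstar : Kernel (Y × Z × X) (Y × Z × X))
    (hKstar : ∀ p : Y × Z × X, Kstar p =
      (PYgXZ (p.2.2, p.2.1)).bind fun y' =>
        (PZgXY (p.2.2, y')).bind fun z' =>
          (PXgZ z').map fun x' => (y', z', x'))
    (q : Y × Z) :
    (eKer PXgZ q).bind Kstar = (TKer PXgZ PYgXZ PZgXY q).bind (eKer PXgZ) := by
  rw [TKer, Kernel.comp_apply,
    Measure.bind_bind (Kernel.measurable (MKer PYgXZ PZgXY)).aemeasurable (Kernel.measurable (eKer PXgZ)).aemeasurable]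
  have hfun : ⇑Kstar = fun p => (MKer PYgXZ PZgXY p).bind ⇑(eKer PXgZ) :=
    funext (Kstar_eq PXgZ PYgXZ PZgXY Kstar hKstar)
  rw [hfun]

lemma MKer_map_snd (p : Y × Z × X) :
    (MKer PYgXZ PZgXY p).map Prod.snd = LKer PYgXZ PZgXY p := by
  rw [MKer, LKer, Kernel.comp_apply, Kernel.comp_apply,
    aux_map_bind _ (Kernel.measurable _) measurable_snd]
  congr 1
  funext r
  rw [bKer_apply, Measure.map_map measurable_snd measurable_prodMk_left]
  have : (Prod.snd ∘ fun z' : Z => (r.2, z')) = id := rfl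
  rw [this, Measure.map_id]

lemma bind_eKer_LKer (ρ : Measure (Y × Z)) (KZ : Kernel Z Z)
    (hKZ' : ∀ z : Z, KZ z =
      (PXgZ z).bind fun x => (PYgXZ (x, z)).bind fun y => PZgXY (x, y)) :
    (ρ.bind (eKer PXgZ)).bind (LKer PYgXZ PZgXY) = (ρ.map Prod.snd).bind KZ := by
  rw [Measure.bind_bind (Kernel.measurable _).aemeasurable (Kernel.measurable _).aemeasurable,
    aux_bind_map ρ measurable_snd (Kernel.measurable KZ)]
  congr 1
  funext q
  exact eKer_bind_LKer PXgZ PYgXZ PZgXY KZ hKZ' q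

lemma bind_eKer_Kstar (ρ : Measure (Y × Z)) (Kstar : Kernel (Y × Z × X) (Y × Z × X))
    (hKstar : ∀ p : Y × Z × X, Kstar p =
      (PYgXZ (p.2.2, p.2.1)).bind fun y' =>
        (PZgXY (p.2.2, y')).bind fun z' =>
          (PXgZ z').map fun x' => (y', z', x')) :
    (ρ.bind (eKer PXgZ)).bind Kstar
      = (ρ.bind (TKer PXgZ PYgXZ PZgXY)).bind (eKer PXgZ) := by
  rw [Measure.bind_bind (Kernel.measurable _).aemeasurable (Kernel.measurable _).aemeasurable,
    Measure.bind_bind (Kernel.measurable _).aemeasurable (Kernel.measurable _).aemeasurable]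
  congr 1
  funext q
  exact eKer_bind_Kstar PXgZ PYgXZ PZgXY Kstar hKstar q

lemma bind_TKer_snd (ρ : Measure (Y × Z)) (KZ : Kernel Z Z)
    (hKZ' : ∀ z : Z, KZ z =
      (PXgZ z).bind fun x => (PYgXZ (x, z)).bind fun y => PZgXY (x, y)) :
    (ρ.bind (TKer PXgZ PYgXZ PZgXY)).map Prod.snd = (ρ.map Prod.snd).bind KZ := by
  rw [aux_map_bind ρ (Kernel.measurable _) measurable_snd,
    aux_bind_map ρ measurable_snd (Kernel.measurable KZ)]
  congr 1
  funext q
  rw [TKer, Kernel.comp_apply, aux_map_bind _ (Kernel.measurable _) measurable_snd]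
  have hfun : (fun p => (MKer PYgXZ PZgXY p).map Prod.snd) = ⇑(LKer PYgXZ PZgXY) :=
    funext (MKer_map_snd PYgXZ PZgXY)
  rw [hfun]
  exact eKer_bind_LKer PXgZ PYgXZ PZgXY KZ hKZ' q

lemma core_ind (KZ : Kernel Z Z)
    (hKZ' : ∀ z : Z, KZ z =
      (PXgZ z).bind fun x => (PYgXZ (x, z)).bind fun y => PZgXY (x, y))
    (Kstar : Kernel (Y × Z × X) (Y × Z × X))
    (hKstar : ∀ p : Y × Z × X, Kstar p =
      (PYgXZ (p.2.2, p.2.1)).bind fun y' =>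
        (PZgXY (p.2.2, y')).bind fun z' =>
          (PXgZ z').map fun x' => (y', z', x')) :
    ∀ (k : ℕ) (ρ : Measure (Y × Z)),
      ((ρ.bind (eKer PXgZ)).bind (kpow Kstar k)).bind (LKer PYgXZ PZgXY)
        = (ρ.map Prod.snd).bind (kpow KZ (k + 1)) := by
  intro k
  induction k with
  | zero =>
    intro ρ
    have hid : ⇑(kpow Kstar 0) = Measure.dirac := by
      funext p
      rw [show kpow Kstar 0 = Kernel.id from rfl, Kernel.id_apply]
    rw [hid, Measure.bind_dirac, bind_eKer_LKer PXgZ PYgXZ PZgXY ρ KZ hKZ']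
    congr 1
    funext z
    rw [show kpow KZ 1 = Kernel.id ∘ₖ KZ from rfl, Kernel.comp_apply]
    have hid' : ⇑(Kernel.id : Kernel Z Z) = Measure.dirac := by
      funext w; rw [Kernel.id_apply]
    rw [hid', Measure.bind_dirac]
  | succ k ih =>
    intro ρ
    have hstep : (ρ.bind (eKer PXgZ)).bind (kpow Kstar (k + 1))
        = ((ρ.bind (TKer PXgZ PYgXZ PZgXY)).bind (eKer PXgZ)).bind (kpow Kstar k) := by
      have hcomp : ⇑(kpow Kstar (k + 1)) = fun p => (Kstar p).bind (kpow Kstar k) := by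
        funext p
        rw [show kpow Kstar (k + 1) = kpow Kstar k ∘ₖ Kstar from rfl, Kernel.comp_apply]
      rw [hcomp, ← Measure.bind_bind (Kernel.measurable Kstar).aemeasurable (Kernel.measurable _).aemeasurable,
        bind_eKer_Kstar PXgZ PYgXZ PZgXY ρ Kstar hKstar]
    rw [hstep, ih (ρ.bind (TKer PXgZ PYgXZ PZgXY)),
      bind_TKer_snd PXgZ PYgXZ PZgXY ρ KZ hKZ',
      Measure.bind_bind (Kernel.measurable KZ).aemeasurable (Kernel.measurable _).aemeasurable]
    have hfin : ⇑(kpow KZ (k + 1 + 1)) = fun w => (KZ w).bind ⇑(kpow KZ (k + 1)) := by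
      funext w
      rw [show kpow KZ (k + 1 + 1) = kpow KZ (k + 1) ∘ₖ KZ from rfl, Kernel.comp_apply]
    rw [hfin]

end Core

/-- `‖K_Z^{n-1}(z,·) − Π_Z‖ ≤ ‖ν_z K*^{(n-2)} − Π*‖` for all n ≥ 2. -/
theorem KZ_tv_le
    {X Y Z : Type*} [MeasurableSpace X] [MeasurableSpace Y] [MeasurableSpace Z]
    (Pi : Measure (X × Y × Z)) [IsProbabilityMeasure Pi]
    (PXgZ : Kernel Z X) [IsMarkovKernel PXgZ]
    (PYgXZ : Kernel (X × Z) Y) [IsMarkovKernel PYgXZ]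
    (PZgXY : Kernel (X × Y) Z) [IsMarkovKernel PZgXY]
    (PXYgZ : Kernel Z (X × Y)) [IsMarkovKernel PXYgZ]
    (hXgZ : Pi.map (fun p : X × Y × Z => (p.2.2, p.1)) = (Pi.map fun p : X × Y × Z => p.2.2) ⊗ₘ PXgZ)
    (hYgXZ : Pi.map (fun p : X × Y × Z => ((p.1, p.2.2), p.2.1)) = (Pi.map fun p : X × Y × Z => (p.1, p.2.2)) ⊗ₘ PYgXZ)
    (hZgXY : Pi.map (fun p : X × Y × Z => ((p.1, p.2.1), p.2.2)) = (Pi.map fun p : X × Y × Z => (p.1, p.2.1)) ⊗ₘ PZgXY)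
    (hXYgZ : Pi.map (fun p : X × Y × Z => (p.2.2, (p.1, p.2.1))) = (Pi.map fun p : X × Y × Z => p.2.2) ⊗ₘ PXYgZ)
    (hseq : ∀ z : Z, PXYgZ z = (PXgZ z).bind fun x => (PYgXZ (x, z)).map fun y => (x, y))
    (KZ : Kernel Z Z)
    (hKZ : ∀ z : Z, KZ z = (PXYgZ z).bind fun q => PZgXY q)
    (Kstar : Kernel (Y × Z × X) (Y × Z × X))
    (hKstar : ∀ p : Y × Z × X, Kstar p =
      (PYgXZ (p.2.2, p.2.1)).bind fun y' =>
        (PZgXY (p.2.2, y')).bind fun z' =>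
          (PXgZ z').map fun x' => (y', z', x'))
    (PiStar : Measure (Y × Z × X))
    (hPiStar : PiStar = (Pi.map fun p : X × Y × Z => (p.2.1, p.2.2)).bind fun q =>
        (PXgZ q.2).map fun x => (q.1, q.2, x))
    :
    ∀ (z : Z) (y₀ : Y) (n : ℕ), 2 ≤ n →
      tvDist ((kpow KZ (n - 1)) z) (Pi.map fun p : X × Y × Z => p.2.2) ≤
        tvDist (((PXgZ z).map fun x => (y₀, z, x)).bind fun u => (kpow Kstar (n - 2)) u)
          PiStar := by
  -- sequential form of KZ
  have hKZ' : ∀ z : Z, KZ z =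
      (PXgZ z).bind fun x => (PYgXZ (x, z)).bind fun y => PZgXY (x, y) := by
    intro z
    have hm : Measurable (fun x : X => (x, z)) := by fun_prop
    have hc : ∀ x : X,
        ((Kernel.id : Kernel X X) ×ₖ (PYgXZ.comap (fun x : X => (x, z)) hm)) x
          = (PYgXZ (x, z)).map fun y => (x, y) := by
      intro x
      rw [Kernel.prod_apply, Kernel.id_apply, Kernel.comap_apply, Measure.dirac_prod]
    have hfun : (fun x => (PYgXZ (x, z)).map fun y => (x, y))
        = ⇑((Kernel.id : Kernel X X) ×ₖ (PYgXZ.comap (fun x : X => (x, z)) hm)) :=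
      funext fun x => (hc x).symm
    rw [hKZ, hseq, hfun,
      Measure.bind_bind (Kernel.measurable _).aemeasurable (Kernel.measurable PZgXY).aemeasurable]
    congr 1
    funext x
    rw [hc x, aux_bind_map _ measurable_prodMk_left (Kernel.measurable PZgXY)]
  -- invariance of Π_Z under KZ
  haveI : IsProbabilityMeasure (Pi.map fun p : X × Y × Z => p.2.2) :=
    Measure.isProbabilityMeasure_map (by fun_prop)
  haveI : IsProbabilityMeasure (Pi.map fun p : X × Y × Z => (p.1, p.2.1)) :=
    Measure.isProbabilityMeasure_map (by fun_prop)
  have hPXY : (Pi.map fun p : X × Y × Z => p.2.2).bind PXYgZ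
      = Pi.map fun p : X × Y × Z => (p.1, p.2.1) := by
    rw [← aux_map_snd_compProd _ PXYgZ, ← hXYgZ,
      Measure.map_map measurable_snd (by fun_prop)]
    rfl
  have hinv : (Pi.map fun p : X × Y × Z => p.2.2).bind KZ
      = Pi.map fun p : X × Y × Z => p.2.2 := by
    have h1 : ⇑KZ = fun z => (PXYgZ z).bind PZgXY := funext hKZ
    rw [h1, ← Measure.bind_bind (Kernel.measurable PXYgZ).aemeasurable (Kernel.measurable PZgXY).aemeasurable,
      hPXY, ← aux_map_snd_compProd _ PZgXY, ← hZgXY,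
      Measure.map_map measurable_snd (by fun_prop)]
    rfl
  haveI : IsMarkovKernel KZ := ⟨fun z0 => by
    rw [hKZ]
    exact aux_isProbabilityMeasure_bind _ (Kernel.measurable _) fun _ => inferInstance⟩
  haveI : IsMarkovKernel Kstar := ⟨fun p => by
    rw [Kstar_eq PXgZ PYgXZ PZgXY Kstar hKstar p]
    exact aux_isProbabilityMeasure_bind _ (Kernel.measurable _) fun _ => inferInstance⟩
  intro z y₀ n hn
  obtain ⟨k, rfl⟩ : ∃ k, n = k + 2 := ⟨n - 2, by omega⟩
  simp only [show k + 2 - 1 = k + 1 from rfl, show k + 2 - 2 = k from rfl]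
  haveI hM1 : IsMarkovKernel (kpow Kstar k) := kpow_isMarkov _ _
  haveI hM2 : IsMarkovKernel (kpow KZ (k + 1)) := kpow_isMarkov _ _
  haveI : IsProbabilityMeasure ((PXgZ z).map fun x => (y₀, z, x)) :=
    Measure.isProbabilityMeasure_map (by fun_prop)
  haveI : IsProbabilityMeasure
      (((PXgZ z).map fun x => (y₀, z, x)).bind fun u => (kpow Kstar k) u) :=
    aux_isProbabilityMeasure_bind _ (Kernel.measurable _) (fun _ => inferInstance)
  haveI : IsProbabilityMeasure (Pi.map fun p : X × Y × Z => (p.2.1, p.2.2)) :=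
    Measure.isProbabilityMeasure_map (by fun_prop)
  have hPS : PiStar = (Pi.map fun p : X × Y × Z => (p.2.1, p.2.2)).bind (eKer PXgZ) := by
    rw [hPiStar]
    congr 1
    funext q
    rw [eKer_apply]
  haveI : IsProbabilityMeasure PiStar := by
    rw [hPS]
    exact aux_isProbabilityMeasure_bind _ (Kernel.measurable _) (fun _ => inferInstance)
  have hA : ((((PXgZ z).map fun x => (y₀, z, x)).bind fun u => (kpow Kstar k) u)).bind
      (LKer PYgXZ PZgXY) = (kpow KZ (k + 1)) z := by
    have hν : ((PXgZ z).map fun x => (y₀, z, x))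
        = (Measure.dirac ((y₀, z) : Y × Z)).bind (eKer PXgZ) := by
      rw [Measure.dirac_bind (Kernel.measurable _), eKer_apply]
    rw [hν, core_ind PXgZ PYgXZ PZgXY KZ hKZ' Kstar hKstar k (Measure.dirac (y₀, z)),
      Measure.map_dirac' measurable_snd, Measure.dirac_bind (Kernel.measurable _)]
  have hB : PiStar.bind (LKer PYgXZ PZgXY) = Pi.map fun p : X × Y × Z => p.2.2 := by
    rw [hPS, bind_eKer_LKer PXgZ PYgXZ PZgXY _ KZ hKZ',
      Measure.map_map measurable_snd (by fun_prop)]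
    exact hinv
  rw [← hA, ← hB]
  exact tvDist_bind_le _ _ (LKer PYgXZ PZgXY)
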